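/- arXiv:1912.07859 — 3 statements merged into one kernel-verified Lean document; each statement's English description precedes it below -/
import Mathlib

section
/- For all configurations x, y ∈ {0,1}^V and every vertex i ∈ V: if x ≥ y componentwise and Φ_c(0, x_{-i}) ≥ Φ_c(x), then Φ_c(0, y_{-i}) ≥ Φ_c(y). -/
open Finset

variable {V : Type*}

/-- Agreement of a configuration on an (unordered) edge. -/
def agreeFun (x : V → Bool) : Sym2 V → Bool :=
  Sym2.lift ⟨fun a b => x a == x b, fun a b => by show (x a == x b) = (x b == x a); cases x a <;> cases x b <;> rfl⟩

/-- The potential of the majority game: number of edges whose endpoints agree. -/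
def Phi [Fintype V] [DecidableEq V] (G : SimpleGraph V) [DecidableRel G.Adj]
    (x : V → Bool) : ℕ :=
  (G.edgeFinset.filter (fun e => agreeFun x e = true)).card

/-- Number of neighbors of `i` playing action `a` in configuration `x`. -/
def nCount [Fintype V] (G : SimpleGraph V) [DecidableRel G.Adj]
    (x : V → Bool) (i : V) (a : Bool) : ℕ :=
  ((G.neighborFinset i).filter (fun j => x j = a)).card

/-- Majority-game utility: number of neighbors agreeing with `i`. -/
def lamC [Fintype V] (G : SimpleGraph V) [DecidableRel G.Adj]
    (x : V → Bool) (i : V) : ℕ :=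
  ((G.neighborFinset i).filter (fun j => x j = x i)).card

/-- Minority-game utility: number of neighbors disagreeing with `i`. -/
def lamA [Fintype V] (G : SimpleGraph V) [DecidableRel G.Adj]
    (x : V → Bool) (i : V) : ℕ :=
  ((G.neighborFinset i).filter (fun j => x j ≠ x i)).card

/-- `x` is a Nash equilibrium of the minority game. -/
def MinorityNE [Fintype V] [DecidableEq V] (G : SimpleGraph V) [DecidableRel G.Adj]
    (x : V → Bool) : Prop :=
  ∀ (i : V) (a : Bool), lamA G (Function.update x i a) i ≤ lamA G x i

/-- A monotone crusade from `C`: starts at the indicator of `C`, ends at all-ones,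
and at each step one coordinate outside `C` is flipped from `0` to `1`. -/
def IsCrusade [DecidableEq V] (C : Finset V) (m : ℕ) (xs : ℕ → V → Bool) : Prop :=
  xs 0 = (fun v => decide (v ∈ C)) ∧ xs m = (fun _ => true) ∧
    ∀ k < m, ∃ i, i ∉ C ∧ xs k i = false ∧ xs (k + 1) = Function.update (xs k) i true

/-- `C` is a `Φ_c`-valid control set: there is a `Φ_c`-adapted monotone crusade from `C`. -/
def ValidControlSet [Fintype V] [DecidableEq V] (G : SimpleGraph V) [DecidableRel G.Adj]
    (C : Finset V) : Prop :=
  ∃ m xs, IsCrusade C m xs ∧ ∀ k < m, Phi G (xs k) ≤ Phi G (xs (k + 1))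

/-- `x ∈ Z`: reachable from the all-ones configuration by allowed down-flips. -/
def InZ [Fintype V] [DecidableEq V] (G : SimpleGraph V) [DecidableRel G.Adj]
    (x : V → Bool) : Prop :=
  ∃ m, ∃ ys : ℕ → V → Bool, ys 0 = (fun _ => true) ∧ ys m = x ∧
    ∀ k < m, ∃ i, ys k i = true ∧ nCount G (ys k) i false ≤ nCount G (ys k) i true ∧
      ys (k + 1) = Function.update (ys k) i false

/-- `‖x‖₁`: number of coordinates equal to `1`. -/
def norm1 [Fintype V] (x : V → Bool) : ℕ :=
  (Finset.univ.filter (fun v => x v = true)).card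


section Aux
variable [Fintype V] [DecidableEq V] (G : SimpleGraph V) [DecidableRel G.Adj]

lemma agree_update_of_not_mem (z : V → Bool) (i : V) (a : Bool) (e : Sym2 V)
    (he : i ∉ e) : agreeFun (Function.update z i a) e = agreeFun z e := by
  induction e using Sym2.ind with
  | _ u v =>
    simp only [Sym2.mem_iff, not_or] at he
    simp [agreeFun, Function.update_of_ne (Ne.symm he.1), Function.update_of_ne (Ne.symm he.2)]

lemma card_incident (z : V → Bool) (i : V) :
    (G.edgeFinset.filter (fun e => agreeFun z e = true ∧ i ∈ e)).card
      = nCount G z i (z i) := by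
  rw [nCount]
  symm
  refine Finset.card_bij (fun j _ => s(i, j)) ?_ ?_ ?_
  · intro j hj
    simp only [Finset.mem_filter, SimpleGraph.mem_neighborFinset] at hj
    simp only [Finset.mem_filter, SimpleGraph.mem_edgeFinset, SimpleGraph.mem_edgeSet]
    exact ⟨hj.1, by simp [agreeFun, hj.2], by simp⟩
  · intro j1 h1 j2 h2 h
    exact Sym2.congr_right.mp h
  · intro e he
    simp only [Finset.mem_filter, SimpleGraph.mem_edgeFinset, SimpleGraph.mem_edgeSet] at he
    induction e using Sym2.ind with
    | _ u v =>
      obtain ⟨hadj, hag, hmem⟩ := he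
      rcases Sym2.mem_iff.mp hmem with rfl | rfl
      · refine ⟨v, ?_, rfl⟩
        simp only [agreeFun, Sym2.lift_mk, beq_iff_eq] at hag
        simp [SimpleGraph.mem_neighborFinset, G.mem_edgeSet.mp hadj, hag.symm]
      · refine ⟨u, ?_, Sym2.eq_swap⟩
        simp only [agreeFun, Sym2.lift_mk, beq_iff_eq] at hag
        simp [SimpleGraph.mem_neighborFinset, (G.mem_edgeSet.mp hadj).symm, hag]

lemma phi_split (z : V → Bool) (i : V) :
    Phi G z = (G.edgeFinset.filter (fun e => agreeFun z e = true ∧ i ∉ e)).card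
      + nCount G z i (z i) := by
  rw [Phi, ← card_incident G z i]
  rw [← Finset.filter_filter, ← Finset.filter_filter]
  have := Finset.card_filter_add_card_filter_not
    (s := G.edgeFinset.filter (fun e => agreeFun z e = true)) (p := fun e => i ∉ e)
  simp only [not_not] at this
  omega

lemma nCount_update (z : V → Bool) (i : V) (a b : Bool) :
    nCount G (Function.update z i a) i b = nCount G z i b := by
  unfold nCount
  apply Finset.card_bij (fun j _ => j) <;> intro j hj
  · simp only [Finset.mem_filter, SimpleGraph.mem_neighborFinset] at hj ⊢
    rw [Function.update_of_ne (G.ne_of_adj hj.1).symm] at hj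
    exact hj
  · intro j2 h2 h; exact h
  · refine ⟨j, ?_, rfl⟩
    simp only [Finset.mem_filter, SimpleGraph.mem_neighborFinset] at hj ⊢
    rw [Function.update_of_ne (G.ne_of_adj hj.1).symm]
    exact hj

lemma nCount_mono (x y : V → Bool) (i : V) (hxy : y ≤ x) :
    nCount G y i true ≤ nCount G x i true ∧ nCount G x i false ≤ nCount G y i false := by
  constructor <;> apply Finset.card_le_card <;> intro j hj <;>
    simp only [Finset.mem_filter] at hj ⊢ <;> refine ⟨hj.1, ?_⟩
  · exact hxy j hj.2
  · cases hy : y j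
    · rfl
    · have := hxy j; rw [hy, hj.2] at this; exact absurd this (by simp)

end Aux

/-- monotonicity of the potential improvement for down-flips. -/
theorem phi_monotone_down [Fintype V] [DecidableEq V]
    (G : SimpleGraph V) [DecidableRel G.Adj] (x y : V → Bool) (i : V)
    (hxy : y ≤ x) (h : Phi G x ≤ Phi G (Function.update x i false)) :
    Phi G y ≤ Phi G (Function.update y i false) := by
  by_cases hyi : y i = false
  · rw [show Function.update y i false = y from funext fun j => by
      by_cases hj : j = i
      · subst hj; simp [hyi]
      · simp [Function.update_of_ne hj]]
  · -- y i = true, hence x i = true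
    have hyi' : y i = true := by cases hy : y i; exact absurd hy hyi; rfl
    have hxi : x i = true := hxy i hyi'
    have hx := phi_split G x i
    have hxu := phi_split G (Function.update x i false) i
    have hy := phi_split G y i
    have hyu := phi_split G (Function.update y i false) i
    rw [Function.update_self] at hxu hyu
    rw [nCount_update] at hxu hyu
    have hAx : (G.edgeFinset.filter (fun e => agreeFun (Function.update x i false) e = true ∧ i ∉ e)).card
        = (G.edgeFinset.filter (fun e => agreeFun x e = true ∧ i ∉ e)).card := by
      apply Finset.card_bij (fun e _ => e)
      · intro e he
        simp only [Finset.mem_filter] at he ⊢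
        exact ⟨he.1, by rw [← agree_update_of_not_mem x i false e he.2.2]; exact he.2.1, he.2.2⟩
      · intro a b _ _ h; exact h
      · intro e he
        simp only [Finset.mem_filter] at he
        exact ⟨e, Finset.mem_filter.mpr ⟨he.1,
          by rw [agree_update_of_not_mem x i false e he.2.2]; exact he.2.1, he.2.2⟩, rfl⟩
    have hAy : (G.edgeFinset.filter (fun e => agreeFun (Function.update y i false) e = true ∧ i ∉ e)).card
        = (G.edgeFinset.filter (fun e => agreeFun y e = true ∧ i ∉ e)).card := by
      apply Finset.card_bij (fun e _ => e)
      · intro e he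
        simp only [Finset.mem_filter] at he ⊢
        exact ⟨he.1, by rw [← agree_update_of_not_mem y i false e he.2.2]; exact he.2.1, he.2.2⟩
      · intro a b _ _ h; exact h
      · intro e he
        simp only [Finset.mem_filter] at he
        exact ⟨e, Finset.mem_filter.mpr ⟨he.1,
          by rw [agree_update_of_not_mem y i false e he.2.2]; exact he.2.1, he.2.2⟩, rfl⟩
    rw [hAx] at hxu
    rw [hAy] at hyu
    rw [hxi] at hx
    rw [hyi'] at hy
    obtain ⟨m1, m2⟩ := nCount_mono G x y i hxy
    omega
end

section
/- If x ∈ {0,1}^V is a Nash equilibrium of the minority game on G, then the support S_x = {i ∈ V : x_i = 1} is a Φ_c-valid control set. -/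
open Finset

variable {V : Type*}

lemma agree_update_not_mem [DecidableEq V] (y : V → Bool) (i : V) (a : Bool)
    (e : Sym2 V) (he : i ∉ e) :
    agreeFun (Function.update y i a) e = agreeFun y e := by
  induction e using Sym2.inductionOn with
  | hf u v =>
    simp only [Sym2.mem_iff, not_or] at he
    simp [agreeFun, Function.update_of_ne (fun h => he.1 h.symm),
      Function.update_of_ne (fun h => he.2 h.symm)]

lemma nCount_update_self [Fintype V] [DecidableEq V] (G : SimpleGraph V) [DecidableRel G.Adj]
    (y : V → Bool) (i : V) (a b : Bool) :
    nCount G (Function.update y i a) i b = nCount G y i b := by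
  unfold nCount
  congr 1
  apply Finset.filter_congr
  intro j hj
  rw [SimpleGraph.mem_neighborFinset] at hj
  rw [Function.update_of_ne (G.ne_of_adj hj).symm]

lemma card_incident_agree [Fintype V] [DecidableEq V] (G : SimpleGraph V) [DecidableRel G.Adj]
    (z : V → Bool) (i : V) :
    ((G.edgeFinset.filter (fun e => agreeFun z e = true)).filter (fun e => i ∈ e)).card
      = nCount G z i (z i) := by
  unfold nCount
  symm
  apply Finset.card_bij (fun j _ => s(i, j))
  · intro j hj
    simp only [Finset.mem_filter, SimpleGraph.mem_neighborFinset] at hj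
    simp only [Finset.mem_filter, SimpleGraph.mem_edgeFinset]
    refine ⟨⟨(SimpleGraph.mem_edgeSet G).mpr hj.1, ?_⟩, Sym2.mem_mk_left i j⟩
    simp [agreeFun, hj.2]
  · intro j hj j' hj' h
    simp only [Finset.mem_filter, SimpleGraph.mem_neighborFinset] at hj hj'
    rw [Sym2.eq_iff] at h
    rcases h with ⟨-, h⟩ | ⟨h, h'⟩
    · exact h
    · exact absurd h'.symm (G.ne_of_adj hj.1)
  · intro e he
    simp only [Finset.mem_filter, SimpleGraph.mem_edgeFinset] at he
    induction e using Sym2.inductionOn with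
    | hf u v =>
      obtain ⟨⟨hadj, hagree⟩, hmem⟩ := he
      rw [SimpleGraph.mem_edgeSet] at hadj
      simp only [agreeFun, Sym2.lift_mk, beq_iff_eq] at hagree
      rw [Sym2.mem_iff] at hmem
      rcases hmem with rfl | rfl
      · exact ⟨v, by simp [SimpleGraph.mem_neighborFinset, hadj, hagree.symm], rfl⟩
      · exact ⟨u, by simp [SimpleGraph.mem_neighborFinset, hadj.symm, hagree], Sym2.eq_swap⟩

lemma phi_update [Fintype V] [DecidableEq V] (G : SimpleGraph V) [DecidableRel G.Adj]
    (y : V → Bool) (i : V) (a : Bool) :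
    Phi G (Function.update y i a) + nCount G y i (y i) = Phi G y + nCount G y i a := by
  have phi_split : ∀ z : V → Bool,
      Phi G z = ((G.edgeFinset.filter (fun e => agreeFun z e = true)).filter
          (fun e => ¬ i ∈ e)).card + nCount G z i (z i) := by
    intro z
    rw [← card_incident_agree G z i, Phi,
      ← Finset.card_filter_add_card_filter_not
        (s := G.edgeFinset.filter (fun e => agreeFun z e = true)) (p := fun e => i ∈ e),
      Nat.add_comm]
  rw [phi_split, phi_split]
  have hrest : (G.edgeFinset.filter (fun e => agreeFun (Function.update y i a) e = true)).filter
      (fun e => ¬ i ∈ e)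
      = (G.edgeFinset.filter (fun e => agreeFun y e = true)).filter (fun e => ¬ i ∈ e) := by
    rw [Finset.filter_filter, Finset.filter_filter]
    apply Finset.filter_congr
    intro e _
    constructor
    · rintro ⟨h1, h2⟩; exact ⟨by rwa [agree_update_not_mem y i a e h2] at h1, h2⟩
    · rintro ⟨h1, h2⟩; exact ⟨by rwa [agree_update_not_mem y i a e h2], h2⟩
  rw [hrest, nCount_update_self, Function.update_self]
  ring

lemma ne_nCount_le [Fintype V] [DecidableEq V] (G : SimpleGraph V) [DecidableRel G.Adj]
    (x : V → Bool) (hx : MinorityNE G x) (i : V) (hi : x i = false) :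
    nCount G x i false ≤ nCount G x i true := by
  have h := hx i true
  unfold lamA at h
  have h1 : (G.neighborFinset i).filter
      (fun j => Function.update x i true j ≠ Function.update x i true i)
      = (G.neighborFinset i).filter (fun j => x j = false) := by
    apply Finset.filter_congr
    intro j hj
    rw [SimpleGraph.mem_neighborFinset] at hj
    rw [Function.update_of_ne (G.ne_of_adj hj).symm, Function.update_self]
    cases x j <;> simp
  have h2 : (G.neighborFinset i).filter (fun j => x j ≠ x i)
      = (G.neighborFinset i).filter (fun j => x j = true) := by
    apply Finset.filter_congr
    intro j _
    rw [hi]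
    cases x j <;> simp
  rw [h1, h2] at h
  exact h

/-- the support of a Nash equilibrium of the minority game is a
`Φ_c`-valid control set. -/
theorem minorityNE_support_valid [Fintype V] [DecidableEq V]
    (G : SimpleGraph V) [DecidableRel G.Adj] (x : V → Bool)
    (hx : MinorityNE G x) :
    ValidControlSet G (Finset.univ.filter (fun i => x i = true)) := by
  classical
  set F : List V := (Finset.univ.filter (fun i => x i = false)).toList with hF
  have hFnd : F.Nodup := Finset.nodup_toList _
  have hFmem : ∀ v, v ∈ F ↔ x v = false := by
    intro v; simp [hF, Finset.mem_toList]
  set xs : ℕ → V → Bool := fun k v => x v || decide (v ∈ F.take k) with hxs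
  -- the step structure
  have hstep : ∀ k (hk : k < F.length),
      F.get ⟨k, hk⟩ ∉ Finset.univ.filter (fun i => x i = true) ∧
      xs k (F.get ⟨k, hk⟩) = false ∧
      xs (k + 1) = Function.update (xs k) (F.get ⟨k, hk⟩) true := by
    intro k hk
    set i := F.get ⟨k, hk⟩ with hi
    have hif : i ∈ F := List.get_mem F ⟨k, hk⟩
    have hxi : x i = false := (hFmem i).mp hif
    have hnt : i ∉ F.take k := by
      intro hmem
      obtain ⟨j, hjm, hje⟩ := List.mem_take_iff_getElem.mp hmem
      have hjk : j < k := lt_of_lt_of_le hjm (min_le_left _ _)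
      have hjl : j < F.length := lt_of_lt_of_le hjm (min_le_right _ _)
      have : j = k := (List.Nodup.getElem_inj_iff hFnd (hi := hjl) (hj := hk)).mp (by
        simpa [hi, List.get_eq_getElem] using hje)
      omega
    refine ⟨by simp [hxi], by simp [hxs, hxi, hnt], ?_⟩
    funext v
    have htake : F.take (k + 1) = F.take k ++ [i] := by
      rw [List.take_succ, List.getElem?_eq_getElem hk]
      rfl
    by_cases hv : v = i
    · subst hv
      simp [hxs, htake, Function.update_self]
    · rw [Function.update_of_ne hv]
      simp only [hxs, htake, List.mem_append, List.mem_singleton, hv, or_false]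
  refine ⟨F.length, xs, ⟨?_, ?_, fun k hk => ?_⟩, fun k hk => ?_⟩
  · funext v
    by_cases hv : x v = true <;> simp [hxs, hv]
  · funext v
    by_cases hv : x v = true
    · simp [hxs, hv]
    · have : x v = false := by cases h : x v <;> simp_all
      simp [hxs, this, List.take_length, (hFmem v).mpr this]
  · exact ⟨F.get ⟨k, hk⟩, hstep k hk⟩
  · obtain ⟨hC, h0, heq⟩ := hstep k hk
    set i := F.get ⟨k, hk⟩
    set y := xs k with hy
    have hle : nCount G y i false ≤ nCount G y i true := by
      have hxi : x i = false := by
        have : y i = false := h0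
        simp only [hy, hxs, Bool.or_eq_false_iff] at this
        exact this.1
      have h1 : nCount G y i false ≤ nCount G x i false := by
        apply Finset.card_le_card
        intro j hj
        simp only [Finset.mem_filter] at hj ⊢
        refine ⟨hj.1, ?_⟩
        have := hj.2
        simp only [hy, hxs, Bool.or_eq_false_iff] at this
        exact this.1
      have h2 : nCount G x i true ≤ nCount G y i true := by
        apply Finset.card_le_card
        intro j hj
        simp only [Finset.mem_filter] at hj ⊢
        refine ⟨hj.1, ?_⟩
        simp [hy, hxs, hj.2]
      exact h1.trans ((ne_nCount_le G x hx i hxi).trans h2)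
    have hphi := phi_update G y i true
    rw [h0] at hphi
    rw [heq]
    omega
end

section
/- Let G be the complete graph on n vertices. Then a subset C ⊆ V is a Φ_c-valid control set if and only if 2|C| ≥ n − 1. -/
open Finset

variable {V : Type*}

section Aux

lemma agreeFun_mk (x : V → Bool) (a b : V) : agreeFun x s(a,b) = (x a == x b) := rfl

variable [Fintype V] [DecidableEq V] (G : SimpleGraph V) [DecidableRel G.Adj]

lemma card_agree_incident (y : V → Bool) (i : V) :
    (G.edgeFinset.filter fun e => agreeFun y e = true ∧ i ∈ e).card
      = ((G.neighborFinset i).filter (fun j => y j = y i)).card := by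
  symm
  apply Finset.card_bij (fun j _ => s(i, j))
  · intro j hj
    obtain ⟨hjN, hjy⟩ := Finset.mem_filter.mp hj
    rw [SimpleGraph.mem_neighborFinset] at hjN
    refine Finset.mem_filter.mpr ⟨SimpleGraph.mem_edgeFinset.mpr hjN, ?_, Sym2.mem_mk_left i j⟩
    rw [agreeFun_mk]; exact beq_iff_eq.mpr hjy.symm
  · intro j1 h1 j2 h2 heq
    exact (Sym2.congr_right).mp heq
  · intro e he
    obtain ⟨heE, hagree, hie⟩ := Finset.mem_filter.mp he
    induction e using Sym2.ind with
    | _ a b =>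
      rw [Sym2.mem_iff] at hie
      rw [SimpleGraph.mem_edgeFinset, SimpleGraph.mem_edgeSet] at heE
      rw [agreeFun_mk] at hagree
      have hab := beq_iff_eq.mp hagree
      rcases hie with rfl | rfl
      · exact ⟨b, Finset.mem_filter.mpr ⟨(G.mem_neighborFinset i b).mpr heE,
          hab.symm⟩, rfl⟩
      · exact ⟨a, Finset.mem_filter.mpr ⟨(G.mem_neighborFinset i a).mpr
          (G.adj_symm heE), hab⟩, Sym2.eq_swap⟩

lemma phi_flip (x : V → Bool) (i : V) (hi : x i = false) :
    Phi G (Function.update x i true) + nCount G x i false = Phi G x + nCount G x i true := by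
  set x' := Function.update x i true with hx'
  have hx'i : x' i = true := by simp [hx']
  have hx'j : ∀ j ≠ i, x' j = x j := fun j hj => Function.update_of_ne hj _ _
  have split : ∀ y : V → Bool, Phi G y =
      (G.edgeFinset.filter fun e => agreeFun y e = true ∧ i ∈ e).card +
      (G.edgeFinset.filter fun e => agreeFun y e = true ∧ i ∉ e).card := by
    intro y
    rw [Phi, ← Finset.filter_filter, ← Finset.filter_filter,
      Finset.card_filter_add_card_filter_not]
  have hsame : (G.edgeFinset.filter fun e => agreeFun x' e = true ∧ i ∉ e)
      = (G.edgeFinset.filter fun e => agreeFun x e = true ∧ i ∉ e) := by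
    apply Finset.filter_congr
    intro e _
    induction e using Sym2.ind with
    | _ a b =>
      rw [Sym2.mem_iff, agreeFun_mk, agreeFun_mk]
      constructor
      · rintro ⟨hab, hni⟩
        push_neg at hni
        rw [hx'j a (Ne.symm hni.1), hx'j b (Ne.symm hni.2)] at hab
        exact ⟨hab, by push_neg; exact hni⟩
      · rintro ⟨hab, hni⟩
        push_neg at hni
        rw [← hx'j a (Ne.symm hni.1), ← hx'j b (Ne.symm hni.2)] at hab
        exact ⟨hab, by push_neg; exact hni⟩
  have h1 : (G.edgeFinset.filter fun e => agreeFun x e = true ∧ i ∈ e).card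
      = nCount G x i false := by
    rw [card_agree_incident, nCount, hi]
  have h2 : (G.edgeFinset.filter fun e => agreeFun x' e = true ∧ i ∈ e).card
      = nCount G x i true := by
    rw [card_agree_incident, nCount, hx'i]
    congr 1
    apply Finset.filter_congr
    intro j hj
    have hji : j ≠ i := G.ne_of_adj (G.adj_symm ((G.mem_neighborFinset i j).mp hj))
    rw [hx'j j hji]
  rw [split x, split x', hsame, h1, h2]
  ring

lemma nodup_not_mem_take {α : Type*} {L : List α} (h : L.Nodup) {k : ℕ} (hk : k < L.length) :
    L[k] ∉ L.take k := by
  intro hmem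
  rw [List.mem_take_iff_getElem] at hmem
  obtain ⟨j, hj, hje⟩ := hmem
  have hjk : j < k := lt_of_lt_of_le hj (min_le_left _ _)
  have := (h.getElem_inj_iff).mp hje
  omega

lemma mem_take_succ {α : Type*} {L : List α} {k : ℕ} (hk : k < L.length) (v : α) :
    v ∈ L.take (k+1) ↔ v ∈ L.take k ∨ v = L[k] := by
  rw [List.take_succ, List.mem_append, List.getElem?_eq_getElem hk]
  simp [eq_comm]

set_option linter.unusedSectionVars false in
theorem completeGraph_validControlSet_iff' [Fintype V] [DecidableEq V]
    (G : SimpleGraph V) [DecidableRel G.Adj] (hG : G = ⊤) (C : Finset V) :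
    (∃ (m : ℕ) (xs : ℕ → V → Bool), ((xs 0 = (fun v => decide (v ∈ C)) ∧ xs m = (fun _ => true) ∧
    ∀ k < m, ∃ i, i ∉ C ∧ xs k i = false ∧ xs (k + 1) = Function.update (xs k) i true))
     ∧ ∀ k < m, Phi G (xs k) ≤ Phi G (xs (k + 1)))
     ↔ Fintype.card V ≤ 2 * C.card + 1 := by
  have hadj : ∀ a b : V, G.Adj a b ↔ a ≠ b := by subst hG; exact fun a b => SimpleGraph.top_adj a b
  have hnbr : ∀ i : V, G.neighborFinset i = Finset.univ.erase i := by
    intro i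
    ext j
    rw [SimpleGraph.mem_neighborFinset, hadj, Finset.mem_erase]
    simp [ne_comm, eq_comm]
  have nsum : ∀ (x : V → Bool) (i : V), nCount G x i true + nCount G x i false
      = Fintype.card V - 1 := by
    intro x i
    rw [nCount, nCount]
    have hneg : (G.neighborFinset i).filter (fun j => x j = false)
        = (G.neighborFinset i).filter (fun j => ¬ (x j = true)) := by
      apply Finset.filter_congr; intro j _; simp
    rw [hneg, Finset.card_filter_add_card_filter_not, hnbr,
      Finset.card_erase_of_mem (Finset.mem_univ i), Finset.card_univ]
  have ntrue : ∀ (x : V → Bool) (i : V), x i = false → nCount G x i true = norm1 x := by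
    intro x i hx
    rw [nCount, norm1, hnbr, Finset.filter_erase, Finset.erase_eq_of_notMem]
    simp [hx]
  have hstepPhi : ∀ (x : V → Bool) (i : V), x i = false →
      (Phi G x ≤ Phi G (Function.update x i true) ↔
        nCount G x i false ≤ nCount G x i true) := by
    intro x i hx
    have := phi_flip G x i hx
    omega
  constructor
  · rintro ⟨m, xs, ⟨h0, hm, hstep⟩, hPhi⟩
    rcases Nat.eq_zero_or_pos m with rfl | hm0
    · have : ∀ v : V, v ∈ C := by
        intro v
        have := congrFun (h0.symm.trans hm) v
        simpa using this
      have : C = Finset.univ := Finset.eq_univ_iff_forall.mpr this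
      rw [this, Finset.card_univ]
      omega
    · obtain ⟨i, hiC, hif, hupd⟩ := hstep 0 hm0
      have hP := hPhi 0 hm0
      rw [hupd] at hP
      have hle := (hstepPhi (xs 0) i hif).mp hP
      have hsum := nsum (xs 0) i
      have htr := ntrue (xs 0) i hif
      have hn1 : norm1 (xs 0) = C.card := by
        rw [norm1, h0]
        congr 1
        ext v
        simp
      have hpos : 1 ≤ Fintype.card V := Fintype.card_pos_iff.mpr ⟨i⟩
      omega
  · intro hn
    set L := (Finset.univ \ C).toList with hL
    have hLnd : L.Nodup := Finset.nodup_toList _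
    have hLmem : ∀ v : V, v ∈ L ↔ v ∉ C := by
      intro v
      rw [hL, Finset.mem_toList, Finset.mem_sdiff]
      simp
    refine ⟨L.length, fun k v => decide (v ∈ C) || decide (v ∈ L.take k), ⟨?_, ?_, ?_⟩, ?_⟩
    · funext v; simp
    · funext v
      rcases Decidable.em (v ∈ C) with h | h
      · simp [h]
      · simp [List.take_length, (hLmem v).mpr h]
    · intro k hk
      refine ⟨L[k], (hLmem _).mp (L.getElem_mem hk), ?_, ?_⟩
      · simp [(hLmem _).mp (L.getElem_mem hk), nodup_not_mem_take hLnd hk]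
      · funext v
        rcases Decidable.em (v = L[k]) with rfl | hv
        · simp [Function.update_self, (mem_take_succ hk _).mpr (Or.inr rfl)]
        · rw [Function.update_of_ne hv]
          have : v ∈ L.take (k+1) ↔ v ∈ L.take k := by
            rw [mem_take_succ hk]
            simp [hv]
          simp only [this]
    · intro k hk
      set x := fun v => decide (v ∈ C) || decide (v ∈ L.take k) with hx
      have hif : x L[k] = false := by
        simp [hx, (hLmem _).mp (L.getElem_mem hk), nodup_not_mem_take hLnd hk]
      have hupd : (fun v => decide (v ∈ C) || decide (v ∈ L.take (k+1)))
          = Function.update x L[k] true := by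
        funext v
        rcases Decidable.em (v = L[k]) with rfl | hv
        · simp [Function.update_self, (mem_take_succ hk _).mpr (Or.inr rfl)]
        · rw [Function.update_of_ne hv]
          have : v ∈ L.take (k+1) ↔ v ∈ L.take k := by
            rw [mem_take_succ hk]
            simp [hv]
          simp only [hx, this]
      show Phi G x ≤ Phi G (fun v => decide (v ∈ C) || decide (v ∈ L.take (k+1)))
      rw [hupd]
      rw [hstepPhi x L[k] hif]
      have hsum := nsum x L[k]
      have htr := ntrue x L[k] hif
      have hCle : C.card ≤ norm1 x := by
        apply Finset.card_le_card
        intro v hv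
        simp [norm1, hx, hv]
      omega


end Aux

/-- on the complete graph on `n` vertices, `C` is a `Φ_c`-valid control
set iff `2|C| ≥ n − 1`. -/
theorem completeGraph_validControlSet_iff [Fintype V] [DecidableEq V]
    (G : SimpleGraph V) [DecidableRel G.Adj] (hG : G = ⊤) (C : Finset V) :
    ValidControlSet G C ↔ Fintype.card V ≤ 2 * C.card + 1 :=
  completeGraph_validControlSet_iff' G hG C
end
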